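/- Let D = (n, g_0; (c_1,n_1), ..., (c_ℓ,n_ℓ)) be a data set of degree n and genus g(D) which is (r,s)-self compatible, i.e., there are indices 1 ≤ r < s ≤ ℓ with n_r = n_s = m and c_r + c_s ≡ 0 (mod m). Then the tuple D' = (n, g_0 + 1; (c_1,n_1), ..., omitting (c_r,n_r) and (c_s,n_s), ..., (c_ℓ,n_ℓ)) is again a valid data set, and its genus satisfies g(D') = g(D) + n/m. -/
import Mathlib


/-- A data set of degree `n` with orbifold genus `g0` and cone-point data `L`:
each cone order divides `n`, each `c_i` is coprime to `n_i`, and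
`Σ_j (n/n_j)·c_j ≡ 0 (mod n)`. -/
def IsDataSet (n _g0 : ℕ) (L : List (ℤ × ℕ)) : Prop :=
  1 ≤ n ∧ (∀ p ∈ L, 0 < p.2 ∧ p.2 ∣ n ∧ Int.gcd p.1 p.2 = 1) ∧
    (n : ℤ) ∣ (L.map (fun p => ((n / p.2 : ℕ) : ℤ) * p.1)).sum

/-- The Riemann–Hurwitz equation `(2-2g)/n = 2-2g0 + Σ_j (1/n_j - 1)`, in its
integer form `2 - 2g = n(2 - 2g0) - Σ_j (n - n/n_j)`. -/
def GenusEq (n g0 : ℕ) (L : List (ℤ × ℕ)) (g : ℤ) : Prop :=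
  2 - 2 * g = (n : ℤ) * (2 - 2 * (g0 : ℤ)) -
    (L.map (fun p => (n : ℤ) - ((n / p.2 : ℕ) : ℤ))).sum

/-- If `D` is an `(r,s)`-self compatible data set (two cone pairs of the
same order `m` with `c_r + c_s ≡ 0 (mod m)`), then dropping those two pairs and
increasing the orbifold genus by one gives a valid data set whose genus is
`g(D) + n/m`. -/
theorem stmt4 (n g0 m : ℕ) (cr cs : ℤ) (A B C : List (ℤ × ℕ)) (g : ℤ)
    (hD : IsDataSet n g0 (A ++ [(cr, m)] ++ B ++ [(cs, m)] ++ C))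
    (hcomp : (m : ℤ) ∣ cr + cs)
    (hg : GenusEq n g0 (A ++ [(cr, m)] ++ B ++ [(cs, m)] ++ C) g) :
    IsDataSet n (g0 + 1) (A ++ B ++ C) ∧
      GenusEq n (g0 + 1) (A ++ B ++ C) (g + ((n / m : ℕ) : ℤ)) := by
  obtain ⟨hn, hmem, hdvd⟩ := hD
  have hmdata := hmem (cr, m) (by simp)
  have hm0 : 0 < m := hmdata.1
  have hmn : m ∣ n := hmdata.2.1
  have hnm : ((n / m : ℕ) : ℤ) * m = n := by
    exact_mod_cast congrArg (Nat.cast : ℕ → ℤ) (Nat.div_mul_cancel hmn)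
  have hsplit : ((A ++ [(cr, m)] ++ B ++ [(cs, m)] ++ C).map
      (fun p => ((n / p.2 : ℕ) : ℤ) * p.1)).sum =
      ((A ++ B ++ C).map (fun p => ((n / p.2 : ℕ) : ℤ) * p.1)).sum +
      ((n / m : ℕ) : ℤ) * (cr + cs) := by
    simp [List.sum_append]; ring
  have hdvd2 : (n : ℤ) ∣ ((n / m : ℕ) : ℤ) * (cr + cs) := by
    obtain ⟨k, hk⟩ := hcomp
    exact ⟨k, by rw [hk, ← mul_assoc, hnm]⟩
  constructor
  · refine ⟨hn, ?_, ?_⟩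
    · intro p hp
      apply hmem
      simp only [List.mem_append] at hp ⊢
      tauto
    · have := hdvd
      rw [hsplit] at this
      exact (Int.dvd_add_right hdvd2).mp (by rwa [add_comm] at this)
  · have hg2 := hg
    unfold GenusEq at hg2 ⊢
    have hsplit2 : ((A ++ [(cr, m)] ++ B ++ [(cs, m)] ++ C).map
        (fun p => (n : ℤ) - ((n / p.2 : ℕ) : ℤ))).sum =
        ((A ++ B ++ C).map (fun p => (n : ℤ) - ((n / p.2 : ℕ) : ℤ))).sum +
        2 * ((n : ℤ) - ((n / m : ℕ) : ℤ)) := by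
      simp [List.sum_append]; ring
    rw [hsplit2] at hg2
    simp only [Nat.cast_add, Nat.cast_one]
    linarith
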